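/- Every metric space of finite asymptotic dimension is large scale paracompact. -/

import Mathlib

open Function Metric ENNReal

noncomputable section

/-- `ℓ¹(S)`: real-valued functions on `S` with finite `ℓ¹`-norm, with the `ℓ¹` metric. -/
abbrev ellOne (S : Type u) : Type u := lp (fun _ : S => ℝ) 1

/-- The full simplex `Δ(S) ⊆ ℓ¹(S)`. -/
def fullSimplex (S : Type u) : Set (ellOne S) :=
  {p | (∀ s, 0 ≤ p s) ∧ (support (p : S → ℝ)).Finite ∧ ∑' s, p s = 1}

/-- The `n`-skeleton `Δ(S)^(n)` of the full simplex. -/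
def skeleton (S : Type u) (n : ℕ) : Set (ellOne S) :=
  {p ∈ fullSimplex S | (support (p : S → ℝ)).encard ≤ n + 1}

/-- A simplicial complex on `S`: a subset of `Δ(S)` closed under passing to
points whose support is contained in the support of a member. -/
def IsSimplicialComplex {S : Type u} (K : Set (ellOne S)) : Prop :=
  K ⊆ fullSimplex S ∧
    ∀ p ∈ K, ∀ q ∈ fullSimplex S,
      support (q : S → ℝ) ⊆ support (p : S → ℝ) → q ∈ K

/-- The star of a vertex `v` in `K`. -/
def star {S : Type u} (K : Set (ellOne S)) (v : S) : Set (ellOne S) :=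
  {p ∈ K | 0 < p v}

/-- `f` is `(λ, C)`-Lipschitz. -/
def IsLipschitzLC {X Y : Type*} [MetricSpace X] [MetricSpace Y]
    (l C : ℝ) (f : X → Y) : Prop :=
  ∀ x y, dist (f x) (f y) ≤ l * dist x y + C

/-- A family of sets is uniformly bounded. -/
def UniformlyBounded {X : Type*} [MetricSpace X] {ι : Type*} (U : ι → Set X) : Prop :=
  ∃ M : ℝ, ∀ i, ∀ x ∈ U i, ∀ y ∈ U i, dist x y ≤ M

/-- `U` is a cover of the whole space. -/
def IsCover {X : Type*} {ι : Type*} (U : ι → Set X) : Prop := ∀ x, ∃ i, x ∈ U i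

/-- The Lebesgue number `inf_x sup_i dist(x, X∖Uᵢ)` of a family, as a value in `ℝ≥0∞`. -/
def lebesgue {X : Type*} [MetricSpace X] {ι : Type*} (U : ι → Set X) : ℝ≥0∞ :=
  ⨅ x : X, ⨆ i, EMetric.infEdist x (U i)ᶜ

/-- The multiplicity of `U` is at most `m`. -/
def MultiplicityLE {X : Type*} [MetricSpace X] {ι : Type*} (U : ι → Set X) (m : ℕ) : Prop :=
  ∀ x : X, {i | 0 < Metric.infDist x ((U i)ᶜ)}.encard ≤ m

/-- `f : X → K` is a `δ`-partition of unity. -/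
def IsDeltaPartitionOfUnity {X : Type*} [MetricSpace X] {S : Type u}
    (δ : ℝ) (K : Set (ellOne S)) (f : X → ellOne S) : Prop :=
  (∀ x, f x ∈ K) ∧ IsLipschitzLC δ δ f ∧
    UniformlyBounded (fun v : S => f ⁻¹' star K v) ∧
    ENNReal.ofReal (1 / δ) ≤ lebesgue (fun v : S => f ⁻¹' star K v)

/-- `X` is large scale paracompact. -/
def LSParacompact (X : Type u) [MetricSpace X] : Prop :=
  ∀ (ι : Type u) (U : ι → Set X), IsCover U → UniformlyBounded U →
    ∀ l C : ℝ, 0 < l → 0 < C →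
      ∃ (S : Type u) (K : Set (ellOne S)) (f : X → ellOne S),
        IsSimplicialComplex K ∧ (∀ x, f x ∈ K) ∧ IsLipschitzLC l C f ∧
        UniformlyBounded (fun v : S => f ⁻¹' star K v) ∧
        ∀ i, ∃ v : S, U i ⊆ f ⁻¹' star K v

/-- `X` has asymptotic dimension at most `n`. -/
def AsdimLE (X : Type u) [MetricSpace X] (n : ℕ) : Prop :=
  ∀ R : ℝ, 0 < R → ∃ (ι : Type u) (U : ι → Set X),
    IsCover U ∧ UniformlyBounded U ∧ MultiplicityLE U (n + 1) ∧
    ENNReal.ofReal R ≤ lebesgue U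

/-- `X` has Property A. -/
def PropertyA (X : Type u) [MetricSpace X] : Prop :=
  ∀ R ε : ℝ, 0 < R → 0 < ε →
    ∃ (M : ℝ) (S : Type u) (φ : S → X → ℝ), 0 < M ∧
      (∀ s x, 0 ≤ φ s x ∧ φ s x ≤ 1) ∧
      (∀ x, (support fun s => φ s x).Finite) ∧
      (∀ x, ∑' s, φ s x = 1) ∧
      (∀ x y, dist x y ≤ R → ∑' s, |φ s x - φ s y| < ε) ∧
      (∀ s, ∀ x ∈ support (φ s), ∀ y ∈ support (φ s), dist x y ≤ M)

/-- `f` has `(R, ε)` variation. -/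
def HasVariation {X Y : Type*} [MetricSpace X] [MetricSpace Y] (R ε : ℝ) (f : X → Y) : Prop :=
  ∀ x y, dist x y ≤ R → dist (f x) (f y) < ε

/-- `g` is a coarse embedding. -/
def CoarseEmbedding {X Y : Type*} [MetricSpace X] [MetricSpace Y] (g : X → Y) : Prop :=
  ∃ ρminus ρplus : ℝ → ℝ, Monotone ρminus ∧ Monotone ρplus ∧
    Filter.Tendsto ρminus Filter.atTop Filter.atTop ∧
    ∀ x y, ρminus (dist x y) ≤ dist (g x) (g y) ∧ dist (g x) (g y) ≤ ρplus (dist x y)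

/-- `X` has bounded geometry: balls of any fixed radius have uniformly bounded cardinality. -/
def BoundedGeometry (X : Type*) [MetricSpace X] : Prop :=
  ∀ r : ℝ, 0 < r → ∃ N : ℕ, ∀ x : X, (Metric.ball x r).encard ≤ N

/-! ### Auxiliary material for Statement 8 -/

lemma memℓp_one_of_finite_support' {S : Type u} {g : S → ℝ}
    (h : (support g).Finite) : Memℓp g 1 := by
  apply memℓp_gen
  simp only [ENNReal.toReal_one, Real.rpow_one]
  apply summable_of_finite_support
  refine h.subset fun v hv => ?_
  intro hv0
  simp [hv0] at hv

/-- Constructor for elements of `ℓ¹(S)` from finitely supported functions. -/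
def mkEll {S : Type u} (g : S → ℝ) (h : (support g).Finite) : ellOne S :=
  ⟨g, memℓp_one_of_finite_support' h⟩

lemma mkEll_apply {S : Type u} (g : S → ℝ) (h : (support g).Finite) (s : S) :
    mkEll g h s = g s := rfl

lemma ellOne_dist {S : Type u} (f g : ellOne S) : dist f g = ∑' s, |f s - g s| := by
  rw [dist_eq_norm, lp.norm_eq_tsum_rpow (by norm_num)]
  simp [Real.norm_eq_abs]

lemma fullSimplex_isSimplicialComplex (S : Type u) :
    IsSimplicialComplex (fullSimplex S) :=
  ⟨subset_rfl, fun _ _ q hq _ => hq⟩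

/-- every metric space of finite asymptotic dimension is large scale
paracompact. -/
theorem lsParacompact_of_finite_asdim (X : Type u) [MetricSpace X]
    (h : ∃ n : ℕ, AsdimLE X n) : LSParacompact X := by
  classical
  obtain ⟨n, hasdim⟩ := h
  intro ι U hUcov hUb l C hl hC
  obtain ⟨M₀, hM₀⟩ := hUb
  by_cases hbdd : ∃ M : ℝ, ∀ x y : X, dist x y ≤ M
  · -- Bounded case: a constant map to a one-vertex complex works.
    obtain ⟨M, hM⟩ := hbdd
    have hsupfin : (support fun _ : PUnit.{u + 1} => (1 : ℝ)).Finite := Set.toFinite _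
    set one : ellOne PUnit.{u + 1} := mkEll (fun _ => (1 : ℝ)) hsupfin with hone_def
    have hone : one ∈ fullSimplex PUnit.{u + 1} := by
      refine ⟨fun _ => zero_le_one, Set.toFinite _, ?_⟩
      rw [tsum_eq_single PUnit.unit (fun b hb => absurd (Subsingleton.elim b PUnit.unit) hb)]
      rfl
    refine ⟨PUnit.{u + 1}, fullSimplex PUnit.{u + 1}, fun _ => one,
      fullSimplex_isSimplicialComplex _, fun _ => hone, ?_, ⟨max M 0, ?_⟩, ?_⟩
    · intro x y
      rw [dist_self]
      positivity
    · intro v x _ y _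
      exact le_trans (hM x y) (le_max_left _ _)
    · intro i
      refine ⟨PUnit.unit, fun x _ => ?_⟩
      exact ⟨hone, zero_lt_one⟩
  · -- Main case.
    set M : ℝ := max M₀ 0 with hM_def
    have hM0 : (0 : ℝ) ≤ M := le_max_right _ _
    set R : ℝ := max (M + 1) ((8 * (n + 1) + 1) / l) with hR_def
    have hMR : M + 1 ≤ R := le_max_left _ _
    have hR0 : 0 < R := by linarith
    have hRl : 8 * ((n : ℝ) + 1) / R ≤ l := by
      have h1 : (8 * ((n : ℝ) + 1) + 1) / l ≤ R := le_max_right _ _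
      rw [div_le_iff₀ hl] at h1
      rw [div_le_iff₀ hR0]
      nlinarith [mul_pos hl hR0]
    obtain ⟨κ, V, hVcov, hVb, hVmult, hVleb⟩ := hasdim R hR0
    obtain ⟨MV, hMV⟩ := hVb
    have hcompl : ∀ v, ((V v)ᶜ).Nonempty := by
      intro v
      rw [Set.nonempty_compl]
      intro hvu
      exact hbdd ⟨MV, fun x y => hMV v x (by simp [hvu]) y (by simp [hvu])⟩
    set d : κ → X → ℝ :=
      fun v x => (min (EMetric.infEdist x (V v)ᶜ) (ENNReal.ofReal R)).toReal with hd_def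
    have hmin_ne : ∀ v (x : X), min (EMetric.infEdist x (V v)ᶜ) (ENNReal.ofReal R) ≠ ⊤ :=
      fun v x => (lt_of_le_of_lt (min_le_right _ _) ENNReal.ofReal_lt_top).ne
    have hd0 : ∀ v x, 0 ≤ d v x := fun v x => ENNReal.toReal_nonneg
    have hdpos : ∀ v x, 0 < d v x ↔ 0 < EMetric.infEdist x (V v)ᶜ := by
      intro v x
      rw [hd_def, ENNReal.toReal_pos_iff]
      constructor
      · rintro ⟨h1, -⟩
        exact lt_of_lt_of_le h1 (min_le_left _ _)
      · intro h1
        exact ⟨lt_min h1 (ENNReal.ofReal_pos.2 hR0), (hmin_ne v x).lt_top⟩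
    have hsupp_sub : ∀ x, (support fun v => d v x) ⊆ {v | 0 < Metric.infDist x ((V v)ᶜ)} := by
      intro x v hv
      have h1 : 0 < d v x := lt_of_le_of_ne (hd0 v x) (Ne.symm hv)
      have h2 : 0 < EMetric.infEdist x (V v)ᶜ := (hdpos v x).1 h1
      exact ENNReal.toReal_pos h2.ne' (Metric.infEdist_ne_top (hcompl v))
    have hsupp_fin : ∀ x, (support fun v => d v x).Finite := fun x =>
      Set.finite_of_encard_le_coe (le_trans (Set.encard_mono (hsupp_sub x)) (hVmult x))
    have hcard : ∀ x, ((hsupp_fin x).toFinset.card : ℝ) ≤ (n : ℝ) + 1 := by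
      intro x
      have h1 := le_trans (Set.encard_mono (hsupp_sub x)) (hVmult x)
      rw [(hsupp_fin x).encard_eq_coe_toFinset_card, Nat.cast_le] at h1
      exact_mod_cast h1
    have hd_lip : ∀ v (x y : X), d v x ≤ d v y + dist x y := by
      intro v x y
      have h1 : min (EMetric.infEdist x (V v)ᶜ) (ENNReal.ofReal R)
          ≤ min (EMetric.infEdist y (V v)ᶜ) (ENNReal.ofReal R) + edist x y := by
        calc min (EMetric.infEdist x (V v)ᶜ) (ENNReal.ofReal R)
            ≤ min (EMetric.infEdist y (V v)ᶜ + edist x y) (ENNReal.ofReal R + edist x y) :=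
              min_le_min EMetric.infEdist_le_infEdist_add_edist (le_add_right le_rfl)
          _ = min (EMetric.infEdist y (V v)ᶜ) (ENNReal.ofReal R) + edist x y :=
              min_add_add_right _ _ _
      have h2 := ENNReal.toReal_mono
        (ENNReal.add_ne_top.2 ⟨hmin_ne v y, edist_ne_top x y⟩) h1
      rwa [ENNReal.toReal_add (hmin_ne v y) (edist_ne_top x y), ← dist_edist] at h2
    have hd_lip_abs : ∀ v (x y : X), |d v x - d v y| ≤ dist x y := by
      intro v x y
      rw [abs_le]
      constructor
      · have h1 := hd_lip v y x
        rw [dist_comm] at h1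
        linarith
      · have h1 := hd_lip v x y
        linarith
    set D : X → ℝ := fun x => ∑' v, d v x with hD_def
    have hDsum : ∀ (x : X) (s : Finset κ), (support fun v => d v x) ⊆ ↑s →
        D x = ∑ v ∈ s, d v x := by
      intro x s hs
      refine tsum_eq_sum fun v hv => ?_
      by_contra h0
      exact hv (hs h0)
    have hleb' : ∀ x : X, ∃ v, R / 2 ≤ d v x := by
      intro x
      have h1 : ENNReal.ofReal R ≤ ⨆ v, EMetric.infEdist x (V v)ᶜ :=
        le_trans hVleb (iInf_le _ x)
      have h2 : ENNReal.ofReal (R / 2) < ⨆ v, EMetric.infEdist x (V v)ᶜ :=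
        lt_of_lt_of_le ((ENNReal.ofReal_lt_ofReal_iff hR0).2 (by linarith)) h1
      obtain ⟨v, hv⟩ := lt_iSup_iff.1 h2
      refine ⟨v, ?_⟩
      have h3 : ENNReal.ofReal (R / 2) ≤ min (EMetric.infEdist x (V v)ᶜ) (ENNReal.ofReal R) :=
        le_min hv.le (ENNReal.ofReal_le_ofReal (by linarith))
      have h4 := ENNReal.toReal_mono (hmin_ne v x) h3
      rwa [ENNReal.toReal_ofReal (by linarith)] at h4
    have hDlow : ∀ x, R / 2 ≤ D x := by
      intro x
      obtain ⟨v, hv⟩ := hleb' x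
      have hvmem : v ∈ (hsupp_fin x).toFinset := by
        rw [Set.Finite.mem_toFinset]
        exact ne_of_gt (lt_of_lt_of_le (half_pos hR0) hv)
      calc R / 2 ≤ d v x := hv
        _ ≤ ∑ w ∈ (hsupp_fin x).toFinset, d w x :=
            Finset.single_le_sum (fun w _ => hd0 w x) hvmem
        _ = D x := (hDsum x _ (by rw [Set.Finite.coe_toFinset])).symm
    have hDpos : ∀ x, 0 < D x := fun x => lt_of_lt_of_le (half_pos hR0) (hDlow x)
    have hFsupp : ∀ x, (support fun v => d v x / D x).Finite := by
      intro x
      refine (hsupp_fin x).subset fun v hv => ?_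
      have hv' : d v x / D x ≠ 0 := hv
      show d v x ≠ 0
      intro h0
      exact hv' (by rw [h0, zero_div])
    set F : X → ellOne κ := fun x => mkEll (fun v => d v x / D x) (hFsupp x) with hF_def
    have hFapp : ∀ (x : X) v, F x v = d v x / D x := fun x v => rfl
    have hFmem : ∀ x, F x ∈ fullSimplex κ := by
      intro x
      refine ⟨fun v => div_nonneg (hd0 v x) (hDpos x).le, hFsupp x, ?_⟩
      have h1 : ∑' v, F x v = (∑' v, d v x) / D x := by
        simp only [hFapp]
        first
        | exact tsum_div_const
        | exact tsum_div_const _ _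
      rw [h1, div_self (hDpos x).ne']
    have hFlip : ∀ x y : X, dist (F x) (F y) ≤ l * dist x y := by
      intro x y
      set A : Finset κ := (hsupp_fin x).toFinset ∪ (hsupp_fin y).toFinset with hA_def
      have hAx : (support fun v => d v x) ⊆ ↑A := by
        rw [hA_def]
        intro v hv
        simp only [Finset.coe_union, Set.Finite.coe_toFinset, Set.mem_union]
        exact Or.inl hv
      have hAy : (support fun v => d v y) ⊆ ↑A := by
        rw [hA_def]
        intro v hv
        simp only [Finset.coe_union, Set.Finite.coe_toFinset, Set.mem_union]
        exact Or.inr hv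
      have hcardA : (A.card : ℝ) ≤ 2 * ((n : ℝ) + 1) := by
        have h1 := Finset.card_union_le (hsupp_fin x).toFinset (hsupp_fin y).toFinset
        have h2 : ((A.card : ℝ)) ≤ ((hsupp_fin x).toFinset.card : ℝ)
            + ((hsupp_fin y).toFinset.card : ℝ) := by
          rw [hA_def]
          exact_mod_cast h1
        linarith [hcard x, hcard y]
      have hDx := hDsum x A hAx
      have hDy := hDsum y A hAy
      have hsum_abs : ∑ v ∈ A, |d v x - d v y| ≤ 2 * ((n : ℝ) + 1) * dist x y := by
        calc ∑ v ∈ A, |d v x - d v y| ≤ ∑ _v ∈ A, dist x y :=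
              Finset.sum_le_sum fun v _ => hd_lip_abs v x y
          _ = A.card * dist x y := by rw [Finset.sum_const, nsmul_eq_mul]
          _ ≤ 2 * ((n : ℝ) + 1) * dist x y := mul_le_mul_of_nonneg_right hcardA dist_nonneg
      have hDD : |D x - D y| ≤ 2 * ((n : ℝ) + 1) * dist x y := by
        rw [hDx, hDy, ← Finset.sum_sub_distrib]
        exact le_trans (Finset.abs_sum_le_sum_abs _ _) hsum_abs
      have hpt : ∀ v, |d v x / D x - d v y / D y|
          ≤ d v x * |D x - D y| / (D x * D y) + |d v x - d v y| / D y := by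
        intro v
        have hx0 := hDpos x
        have hy0 := hDpos y
        have heq : d v x / D x - d v y / D y
            = d v x * (D y - D x) / (D x * D y) + (d v x - d v y) / D y := by
          field_simp
          ring
        rw [heq]
        refine le_trans (abs_add_le _ _) ?_
        rw [abs_div, abs_div, abs_mul, abs_of_nonneg (hd0 v x),
          abs_of_pos (mul_pos hx0 hy0), abs_of_pos hy0, abs_sub_comm (D y) (D x)]
      have hz : ∀ v ∉ A, |F x v - F y v| = 0 := by
        intro v hv
        have h1 : d v x = 0 := by
          by_contra h0
          exact hv (hAx h0)
        have h2 : d v y = 0 := by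
          by_contra h0
          exact hv (hAy h0)
        rw [hFapp, hFapp, h1, h2, zero_div, zero_div, sub_zero, abs_zero]
      rw [ellOne_dist, tsum_eq_sum hz]
      have hsum1 : ∑ v ∈ A, d v x * |D x - D y| / (D x * D y) = |D x - D y| / D y := by
        rw [← Finset.sum_div, ← Finset.sum_mul, ← hDx]
        exact mul_div_mul_left _ _ (hDpos x).ne'
      calc ∑ v ∈ A, |F x v - F y v|
          ≤ ∑ v ∈ A, (d v x * |D x - D y| / (D x * D y) + |d v x - d v y| / D y) :=
            Finset.sum_le_sum fun v _ => by rw [hFapp, hFapp]; exact hpt v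
        _ = |D x - D y| / D y + (∑ v ∈ A, |d v x - d v y|) / D y := by
            rw [Finset.sum_add_distrib, hsum1, Finset.sum_div]
        _ ≤ (2 * ((n : ℝ) + 1) * dist x y) / (R / 2)
            + (2 * ((n : ℝ) + 1) * dist x y) / (R / 2) := by
            refine add_le_add ?_ ?_
            · exact div_le_div₀ (by positivity) hDD (half_pos hR0) (hDlow y)
            · exact div_le_div₀ (by positivity) hsum_abs (half_pos hR0) (hDlow y)
        _ = (8 * ((n : ℝ) + 1) / R) * dist x y := by
            field_simp
            ring
        _ ≤ l * dist x y := mul_le_mul_of_nonneg_right hRl dist_nonneg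
    have hstar_sub : ∀ v, F ⁻¹' star (fullSimplex κ) v ⊆ V v := by
      intro v x hx
      have hpos : 0 < F x v := hx.2
      have h1 : 0 < d v x := by
        by_contra h0
        push_neg at h0
        have h2 : d v x = 0 := le_antisymm h0 (hd0 v x)
        rw [hFapp, h2, zero_div] at hpos
        exact lt_irrefl _ hpos
      have h2 := (hdpos v x).1 h1
      by_contra hxV
      have hxc : x ∈ (V v)ᶜ := hxV
      exact lt_irrefl _ (lt_of_lt_of_eq h2 (Metric.infEDist_zero_of_mem hxc))
    refine ⟨κ, fullSimplex κ, F, fullSimplex_isSimplicialComplex _, hFmem, ?_, ?_, ?_⟩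
    · intro x y
      have h1 := hFlip x y
      have h2 : l * dist x y ≤ l * dist x y + C := by linarith
      exact le_trans h1 h2
    · exact ⟨MV, fun v x hx y hy => hMV v x (hstar_sub v hx) y (hstar_sub v hy)⟩
    · have hne : Nonempty X := by
        by_contra hXe
        rw [not_nonempty_iff] at hXe
        exact hbdd ⟨0, fun x y => (hXe.false x).elim⟩
      intro i
      rcases (U i).eq_empty_or_nonempty with hUe | ⟨x₀, hx₀⟩
      · obtain ⟨v, -⟩ := hVcov (Classical.arbitrary X)
        exact ⟨v, by rw [hUe]; exact Set.empty_subset _⟩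
      · have h0 : ENNReal.ofReal R ≤ ⨆ v, EMetric.infEdist x₀ (V v)ᶜ :=
          le_trans hVleb (iInf_le _ x₀)
        have h1 : ENNReal.ofReal M < ⨆ v, EMetric.infEdist x₀ (V v)ᶜ :=
          lt_of_lt_of_le ((ENNReal.ofReal_lt_ofReal_iff hR0).2 (by linarith)) h0
        obtain ⟨v, hv⟩ := lt_iSup_iff.1 h1
        refine ⟨v, fun x hx => ?_⟩
        refine ⟨hFmem x, ?_⟩
        rw [hFapp]
        apply div_pos _ (hDpos x)
        refine (hdpos v x).2 ?_
        by_contra hz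
        push_neg at hz
        have hzero : EMetric.infEdist x (V v)ᶜ = 0 := le_antisymm hz (zero_le)
        have h2 : EMetric.infEdist x₀ (V v)ᶜ ≤ edist x₀ x :=
          calc EMetric.infEdist x₀ (V v)ᶜ
              ≤ EMetric.infEdist x (V v)ᶜ + edist x₀ x :=
                EMetric.infEdist_le_infEdist_add_edist
            _ = edist x₀ x := by rw [hzero, zero_add]
        have h3 : edist x₀ x ≤ ENNReal.ofReal M := by
          rw [edist_dist]
          exact ENNReal.ofReal_le_ofReal (le_trans (hM₀ i x₀ hx₀ x hx) (le_max_left _ _))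
        exact lt_irrefl _ (lt_of_lt_of_le hv (le_trans h2 h3))

end
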